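/- arXiv:2510.20213 — 2 statements merged into one kernel-verified Lean document; each statement's English description precedes it below -/
import Mathlib

section
/- Let I be an arbitrary index set and (aᵢ, bᵢ) ∈ ℝⁿ × ℝ for i ∈ I. The system {x ∈ ℝⁿ : aᵢᵀx ≤ bᵢ for all i ∈ I} is nonempty if and only if the vector (0ₙ, 1) does not belong to the closed conical hull of {(−aᵢ, −bᵢ) : i ∈ I}. -/
open scoped RealInnerProductSpace

/-- The conical hull (set of all nonnegative finite linear combinations) of a set. -/
def coneHull {E : Type*} [AddCommMonoid E] [Module ℝ E] (S : Set E) : Set E :=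
  {z | ∃ (ι : Type) (t : Finset ι) (c : ι → ℝ) (v : ι → E),
    (∀ i, 0 ≤ c i) ∧ (∀ i ∈ t, v i ∈ S) ∧ z = ∑ i ∈ t, c i • v i}

lemma zero_mem_coneHull {E : Type*} [AddCommMonoid E] [Module ℝ E] (S : Set E) :
    (0 : E) ∈ coneHull S :=
  ⟨Empty, ∅, fun i => i.elim, fun i => i.elim, fun i => i.elim, fun i _ => i.elim, by simp⟩

lemma mem_coneHull_self {E : Type*} [AddCommMonoid E] [Module ℝ E] (S : Set E) {x : E}
    (hx : x ∈ S) : x ∈ coneHull S :=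
  ⟨Unit, Finset.univ, fun _ => 1, fun _ => x, fun _ => zero_le_one, fun _ _ => hx, by simp⟩

lemma smul_mem_coneHull {E : Type*} [AddCommMonoid E] [Module ℝ E] (S : Set E) {c : ℝ}
    (hc : 0 ≤ c) {x : E} (hx : x ∈ coneHull S) : c • x ∈ coneHull S := by
  obtain ⟨ι, t, d, v, hd, hv, rfl⟩ := hx
  exact ⟨ι, t, fun i => c * d i, v, fun i => mul_nonneg hc (hd i), hv, by
    rw [Finset.smul_sum]; simp [smul_smul]⟩

lemma convex_coneHull {E : Type*} [AddCommMonoid E] [Module ℝ E] (S : Set E) :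
    Convex ℝ (coneHull S) := by
  rintro x hx y hy p q hp hq hpq
  obtain ⟨ι1, t1, c1, v1, hc1, hv1, rfl⟩ := hx
  obtain ⟨ι2, t2, c2, v2, hc2, hv2, rfl⟩ := hy
  refine ⟨ι1 ⊕ ι2, t1.disjSum t2, Sum.elim (fun i => p * c1 i) (fun j => q * c2 j),
    Sum.elim v1 v2, ?_, ?_, ?_⟩
  · rintro (i | j)
    · exact mul_nonneg hp (hc1 i)
    · exact mul_nonneg hq (hc2 j)
  · rintro (i | j) hi
    · exact hv1 i (by simpa using hi)
    · exact hv2 j (by simpa using hi)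
  · rw [Finset.sum_disjSum]
    simp [Finset.smul_sum, mul_smul]

theorem linear_system_nonempty_iff
    {n : ℕ} {I : Type*} (a : I → EuclideanSpace ℝ (Fin n)) (b : I → ℝ) :
    {x : EuclideanSpace ℝ (Fin n) | ∀ i : I, ⟪a i, x⟫ ≤ b i}.Nonempty ↔
      ((0 : EuclideanSpace ℝ (Fin n)), (1 : ℝ)) ∉
        closure (coneHull {z : EuclideanSpace ℝ (Fin n) × ℝ | ∃ i : I, z = (-a i, -b i)}) := by
  set S : Set (EuclideanSpace ℝ (Fin n) × ℝ) := {z | ∃ i : I, z = (-a i, -b i)} with hS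
  constructor
  · rintro ⟨x, hx⟩ hmem
    set L : (EuclideanSpace ℝ (Fin n) × ℝ) →L[ℝ] ℝ :=
      (innerSL ℝ x).comp (ContinuousLinearMap.fst ℝ _ _) - ContinuousLinearMap.snd ℝ _ _ with hL
    have hLdef : ∀ w : EuclideanSpace ℝ (Fin n) × ℝ, L w = ⟪x, w.1⟫ - w.2 := fun w => rfl
    have hpos : coneHull S ⊆ L ⁻¹' Set.Ici 0 := by
      rintro w ⟨ι, t, c, v, hc, hv, rfl⟩
      simp only [Set.mem_preimage, Set.mem_Ici, map_sum]
      apply Finset.sum_nonneg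
      intro i hi
      obtain ⟨j, hj⟩ := hv i hi
      rw [map_smul, hj, smul_eq_mul]
      have h1 : L (-a j, -b j) = b j - ⟪a j, x⟫ := by
        rw [hLdef]
        show ⟪x, -a j⟫ - (-b j) = _
        rw [inner_neg_right, real_inner_comm]
        ring
      rw [h1]
      exact mul_nonneg (hc i) (sub_nonneg.2 (hx j))
    have hclos : closure (coneHull S) ⊆ L ⁻¹' Set.Ici 0 :=
      closure_minimal hpos (isClosed_Ici.preimage L.continuous)
    have h01 : (0 : ℝ) ≤ L (0, 1) := hclos hmem
    rw [hLdef] at h01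
    simp at h01
    linarith
  · intro hmem
    have hconv : Convex ℝ (closure (coneHull S)) := (convex_coneHull S).closure
    obtain ⟨f, u, hfu, hK⟩ := geometric_hahn_banach_point_closed hconv isClosed_closure hmem
    have hu0 : u < 0 := by
      have := hK 0 (subset_closure (zero_mem_coneHull S))
      simpa using this
    have hfnn : ∀ w ∈ coneHull S, 0 ≤ f w := by
      intro w hw
      by_contra h
      push_neg at h
      have hc : 0 ≤ (u - 1) / f w :=
        div_nonneg_of_nonpos (by linarith) h.le
      have h2 := hK _ (subset_closure (smul_mem_coneHull S hc hw))
      rw [map_smul, smul_eq_mul, div_mul_cancel₀ _ h.ne] at h2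
      linarith
    set s : ℝ := f (0, 1) with hs
    have hs0 : s < 0 := lt_trans hfu hu0
    have hsneg : (0 : ℝ) < -s := by linarith
    set g : EuclideanSpace ℝ (Fin n) →L[ℝ] ℝ :=
      f.comp (ContinuousLinearMap.inl ℝ _ _) with hg
    have hfsplit : ∀ (z : EuclideanSpace ℝ (Fin n)) (t : ℝ), f (z, t) = g z + t * s := by
      intro z t
      have hzt : (z, t) = ((z, (0 : ℝ)) : EuclideanSpace ℝ (Fin n) × ℝ)
          + t • ((0 : EuclideanSpace ℝ (Fin n)), (1 : ℝ)) := by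
        simp [Prod.ext_iff]
      rw [hzt, map_add, map_smul, smul_eq_mul]
      rfl
    set y := (InnerProductSpace.toDual ℝ (EuclideanSpace ℝ (Fin n))).symm g with hy
    have hyz : ∀ z, ⟪y, z⟫ = g z := fun z => InnerProductSpace.toDual_symm_apply
    refine ⟨(-s)⁻¹ • y, fun i => ?_⟩
    have hgen := hfnn (-a i, -b i) (mem_coneHull_self S ⟨i, rfl⟩)
    rw [hfsplit] at hgen
    rw [map_neg] at hgen
    have hga : g (a i) ≤ b i * (-s) := by linarith
    have hinner : ⟪a i, (-s)⁻¹ • y⟫ = (-s)⁻¹ * g (a i) := by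
      rw [real_inner_smul_right, real_inner_comm, hyz]
    rw [hinner]
    rw [inv_mul_le_iff₀ hsneg]
    linarith
end

section
/- Let a ∈ ℝⁿ, b ∈ ℝ and x̄ ∈ ℝⁿ with aᵀx̄ ≤ b, and assume (a,b) ≠ (0,0) or aᵀx̄ < b. Then x̄ satisfies the perturbed inequality (a + αu)ᵀ x̄ ≤ b + αv for all (u,v) in the closed unit ball of ℝⁿ⁺¹ if and only if α · ‖(x̄, −1)‖ ≤ b − aᵀx̄, i.e. the largest robust radius for this single constraint at x̄ equals (b − aᵀx̄)/√(‖x̄‖² + 1). -/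
open scoped RealInnerProductSpace

theorem single_constraint_robust_radius
    {n : ℕ} (a : EuclideanSpace ℝ (Fin n)) (b : ℝ) (xbar : EuclideanSpace ℝ (Fin n))
    (α : ℝ) (hα : 0 ≤ α) (hfeas : ⟪a, xbar⟫ ≤ b)
    (hne : (a, b) ≠ (0, (0 : ℝ)) ∨ ⟪a, xbar⟫ < b) :
    ((∀ (u : EuclideanSpace ℝ (Fin n)) (v : ℝ), ‖u‖ ^ 2 + v ^ 2 ≤ 1 →
        ⟪a + α • u, xbar⟫ ≤ b + α * v) ↔
      α * Real.sqrt (‖xbar‖ ^ 2 + 1) ≤ b - ⟪a, xbar⟫) := by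
  set s : ℝ := Real.sqrt (‖xbar‖ ^ 2 + 1) with hs_def
  have hpos : (0 : ℝ) < ‖xbar‖ ^ 2 + 1 := by positivity
  have hs2 : s ^ 2 = ‖xbar‖ ^ 2 + 1 := Real.sq_sqrt hpos.le
  have hs0 : 0 < s := Real.sqrt_pos.mpr hpos
  constructor
  · intro h
    have hb := h (s⁻¹ • xbar) (-s⁻¹) ?_
    · have hin : ⟪a + α • (s⁻¹ • xbar), xbar⟫ =
          ⟪a, xbar⟫ + α * s⁻¹ * ‖xbar‖ ^ 2 := by
        rw [inner_add_left, real_inner_smul_left, real_inner_smul_left,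
          real_inner_self_eq_norm_sq]
        ring
      rw [hin] at hb
      have h2 : α * s⁻¹ * (‖xbar‖ ^ 2 + 1) ≤ b - ⟪a, xbar⟫ := by linarith
      have h3 : α * s = α * s⁻¹ * (‖xbar‖ ^ 2 + 1) := by
        rw [← hs2]; field_simp
      linarith
    · have hnorm : ‖(s⁻¹ • xbar : EuclideanSpace ℝ (Fin n))‖ = s⁻¹ * ‖xbar‖ := by
        rw [norm_smul, Real.norm_eq_abs, abs_of_pos (inv_pos.mpr hs0)]
      rw [hnorm]
      have : s⁻¹ ^ 2 * s ^ 2 = 1 := by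
        field_simp
      nlinarith [hs2]
  · intro h u v huv
    have h1 : ⟪u, xbar⟫ ≤ ‖u‖ * ‖xbar‖ := real_inner_le_norm u xbar
    have key : ⟪u, xbar⟫ - v ≤ s := by
      nlinarith [sq_nonneg (‖u‖ + ‖xbar‖ * v), sq_nonneg (‖u‖ * ‖xbar‖ - v - s),
        sq_nonneg (‖u‖ * ‖xbar‖ - v + s), norm_nonneg u, norm_nonneg xbar, hs0, hs2, huv, h1]
    have hin : ⟪a + α • u, xbar⟫ = ⟪a, xbar⟫ + α * ⟪u, xbar⟫ := by
      rw [inner_add_left, real_inner_smul_left]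
    rw [hin]
    nlinarith [mul_le_mul_of_nonneg_left key hα, h]
end
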